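/- Let $k > s \ge 2$, $n > 2k-s$, and let $G$ be the bipartite graph with both parts equal to $\mathcal{C} \setminus \{[k]\}$ where $\mathcal{C} = \{C \in \binom{[n]}{k} : |C\cap[k]| \ge s\}$, and $C_1 \in$ part 1 adjacent to $C_2 \in$ part 2 iff $|C_1 \cap C_2| < s$. Then the maximum independent set in $G$ has size exactly $|\mathcal{C}| - 1$ (the size of one part). -/

import Mathlib

open Finset

namespace MIG

/-- class mass: number of `m`-subsets pairs. -/
def cc (k M m : ℕ) : ℕ := Nat.choose k m * Nat.choose M m

lemma cc_pos {k M m : ℕ} (hk : m ≤ k) (hM : m ≤ M) : 0 < cc k M m :=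
  Nat.mul_pos (Nat.choose_pos hk) (Nat.choose_pos hM)

lemma cc_step (k M x : ℕ) :
    cc k M (x + 1) * ((x + 1) * (x + 1)) = cc k M x * ((k - x) * (M - x)) := by
  unfold cc
  have h1 := Nat.choose_succ_right_eq k x
  have h2 := Nat.choose_succ_right_eq M x
  calc Nat.choose k (x+1) * Nat.choose M (x+1) * ((x + 1) * (x + 1))
      = (Nat.choose k (x+1) * (x+1)) * (Nat.choose M (x+1) * (x+1)) := by ring
    _ = (Nat.choose k x * (k - x)) * (Nat.choose M x * (M - x)) := by rw [h1, h2]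
    _ = Nat.choose k x * Nat.choose M x * ((k - x) * (M - x)) := by ring

/-- monotonicity along the antidiagonal `x + y = K`: mass increases towards middle. -/
lemma domK {k M K : ℕ} (hKk : K ≤ k) (hKM : K ≤ M) :
    ∀ t x y, y - x ≤ t → x + y = K → x ≤ y → cc k M x ≤ cc k M y := by
  intro t
  induction t using Nat.strong_induction_on with
  | _ t IH =>
    intro x y hyx hsum hxy
    rcases Nat.lt_or_ge x y with hlt | hge
    · rcases Nat.lt_or_ge (x+1) y with hlt2 | hge2
      · -- step case, y ≥ x + 2
        have hy1 : 1 ≤ y := by omega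
        have ih : cc k M (x+1) ≤ cc k M (y-1) := by
          refine IH (t - 2) (by omega) (x+1) (y-1) (by omega) (by omega) (by omega)
        have e1 : cc k M (x+1) * ((x+1)*(x+1)) = cc k M x * ((k-x)*(M-x)) := cc_step k M x
        have e2 : cc k M y * (y*y) = cc k M (y-1) * ((k-(y-1))*(M-(y-1))) := by
          have := cc_step k M (y-1)
          rwa [Nat.sub_add_cancel hy1] at this
        have key : cc k M x * ((y*y) * ((x+1)*(x+1)))
            ≤ cc k M y * ((y*y) * ((x+1)*(x+1))) := by
          calc cc k M x * ((y*y) * ((x+1)*(x+1)))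
              ≤ cc k M x * (((k-x)*(M-x)) * ((k-(y-1))*(M-(y-1)))) := by
                apply Nat.mul_le_mul_left
                have a1 : y ≤ k - x := by omega
                have a2 : y ≤ M - x := by omega
                have a3 : x + 1 ≤ k - (y-1) := by omega
                have a4 : x + 1 ≤ M - (y-1) := by omega
                calc (y*y) * ((x+1)*(x+1)) = (y*(x+1)) * (y*(x+1)) := by ring
                  _ ≤ ((k-x)*(M-(y-1))) * ((M-x)*(k-(y-1))) :=
                      Nat.mul_le_mul (Nat.mul_le_mul a1 a4) (Nat.mul_le_mul a2 a3)
                  _ = ((k-x)*(M-x)) * ((k-(y-1))*(M-(y-1))) := by ring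
            _ = (cc k M x * ((k-x)*(M-x))) * ((k-(y-1))*(M-(y-1))) := by ring
            _ = (cc k M (x+1) * ((x+1)*(x+1))) * ((k-(y-1))*(M-(y-1))) := by rw [e1]
            _ ≤ (cc k M (y-1) * ((x+1)*(x+1))) * ((k-(y-1))*(M-(y-1))) := by
                exact Nat.mul_le_mul_right _ (Nat.mul_le_mul_right _ ih)
            _ = (cc k M (y-1) * ((k-(y-1))*(M-(y-1)))) * ((x+1)*(x+1)) := by ring
            _ = (cc k M y * (y*y)) * ((x+1)*(x+1)) := by rw [e2]
            _ = cc k M y * ((y*y) * ((x+1)*(x+1))) := by ring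
        have hpos : 0 < (y*y) * ((x+1)*(x+1)) := by positivity
        exact Nat.le_of_mul_le_mul_right (by simpa [Nat.mul_comm] using key) hpos
      · -- y = x + 1
        have hyx1 : y = x + 1 := by omega
        subst hyx1
        have e1 : cc k M (x+1) * ((x+1)*(x+1)) = cc k M x * ((k-x)*(M-x)) := cc_step k M x
        have key : cc k M x * ((x+1)*(x+1)) ≤ cc k M (x+1) * ((x+1)*(x+1)) := by
          rw [e1]
          apply Nat.mul_le_mul_left
          have a1 : x + 1 ≤ k - x := by omega
          have a2 : x + 1 ≤ M - x := by omega
          exact Nat.mul_le_mul a1 a2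
        have hpos : 0 < (x+1)*(x+1) := by positivity
        exact Nat.le_of_mul_le_mul_right (by simpa [Nat.mul_comm] using key) hpos
    · have : x = y := by omega
      subst this; exact le_rfl

/-- monotonicity along the antidiagonal `x + y = U` where `U ≥ k, M`:
mass decreases past the middle. -/
lemma domA {k M U : ℕ} (hkU : k ≤ U) (hMU : M ≤ U) :
    ∀ t x y, y - x ≤ t → x + y = U → x ≤ y → cc k M y ≤ cc k M x := by
  intro t
  induction t using Nat.strong_induction_on with
  | _ t IH =>
    intro x y hyx hsum hxy
    rcases Nat.lt_or_ge x y with hlt | hge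
    · rcases Nat.lt_or_ge (x+1) y with hlt2 | hge2
      · have hy1 : 1 ≤ y := by omega
        have ih : cc k M (y-1) ≤ cc k M (x+1) := by
          refine IH (t - 2) (by omega) (x+1) (y-1) (by omega) (by omega) (by omega)
        have e1 : cc k M (x+1) * ((x+1)*(x+1)) = cc k M x * ((k-x)*(M-x)) := cc_step k M x
        have e2 : cc k M y * (y*y) = cc k M (y-1) * ((k-(y-1))*(M-(y-1))) := by
          have := cc_step k M (y-1)
          rwa [Nat.sub_add_cancel hy1] at this
        have key : cc k M y * ((y*y) * ((x+1)*(x+1)))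
            ≤ cc k M x * ((y*y) * ((x+1)*(x+1))) := by
          calc cc k M y * ((y*y) * ((x+1)*(x+1)))
              = (cc k M y * (y*y)) * ((x+1)*(x+1)) := by ring
            _ = (cc k M (y-1) * ((k-(y-1))*(M-(y-1)))) * ((x+1)*(x+1)) := by rw [e2]
            _ = (cc k M (y-1) * ((x+1)*(x+1))) * ((k-(y-1))*(M-(y-1))) := by ring
            _ ≤ (cc k M (x+1) * ((x+1)*(x+1))) * ((k-(y-1))*(M-(y-1))) := by
                exact Nat.mul_le_mul_right _ (Nat.mul_le_mul_right _ ih)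
            _ = (cc k M x * ((k-x)*(M-x))) * ((k-(y-1))*(M-(y-1))) := by rw [e1]
            _ = cc k M x * (((k-x)*(M-(y-1))) * ((M-x)*(k-(y-1)))) := by ring
            _ ≤ cc k M x * ((y*(x+1)) * (y*(x+1))) := by
                apply Nat.mul_le_mul_left
                have a1 : k - x ≤ y := by omega
                have a2 : M - (y-1) ≤ x + 1 := by omega
                have a3 : M - x ≤ y := by omega
                have a4 : k - (y-1) ≤ x + 1 := by omega
                exact Nat.mul_le_mul (Nat.mul_le_mul a1 a2) (Nat.mul_le_mul a3 a4)
            _ = cc k M x * ((y*y) * ((x+1)*(x+1))) := by ring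
        have hpos : 0 < (y*y) * ((x+1)*(x+1)) := by positivity
        exact Nat.le_of_mul_le_mul_right (by simpa [Nat.mul_comm] using key) hpos
      · have hyx1 : y = x + 1 := by omega
        subst hyx1
        have e1 : cc k M (x+1) * ((x+1)*(x+1)) = cc k M x * ((k-x)*(M-x)) := cc_step k M x
        have key : cc k M (x+1) * ((x+1)*(x+1)) ≤ cc k M x * ((x+1)*(x+1)) := by
          rw [e1]
          apply Nat.mul_le_mul_left
          have a1 : k - x ≤ x + 1 := by omega
          have a2 : M - x ≤ x + 1 := by omega
          exact Nat.mul_le_mul a1 a2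
        have hpos : 0 < (x+1)*(x+1) := by positivity
        exact Nat.le_of_mul_le_mul_right (by simpa [Nat.mul_comm] using key) hpos
    · have : x = y := by omega
      subst this; exact le_rfl

/-- partial sums of class masses over classes `1..m`. -/
def FF (k M m : ℕ) : ℕ := ∑ j ∈ range m, cc k M (j + 1)

lemma FF_succ (k M m : ℕ) : FF k M (m + 1) = FF k M m + cc k M (m + 1) :=
  sum_range_succ _ _

lemma FF_mono (k M : ℕ) : Monotone (FF k M) := by
  intro a b hab
  exact sum_le_sum_of_subset (by simpa using hab)

/-- the coupling matrix: overlap of the `m`-th block of `[0,T)` (ascending) with the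
`m'`-th block (descending), where `T = FF (K-1)`. -/
def XX (k M K m m' : ℕ) : ℕ :=
  min (FF k M m) (FF k M (K-1) - FF k M (m'-1)) -
    max (FF k M (m-1)) (FF k M (K-1) - FF k M m')

lemma clamp_eq (a b u v : ℕ) (hab : a ≤ b) (hvu : v ≤ u) :
    min b u - max a v = max a (min b u) - max a (min b v) := by omega

lemma tele_anti (p : ℕ → ℕ) (anti : ∀ i j, i ≤ j → p j ≤ p i) (L : ℕ) :
    ∑ i ∈ range L, (p i - p (i + 1)) = p 0 - p L := by
  induction L with
  | zero => simp
  | succ L ih =>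
      rw [sum_range_succ, ih]
      have h1 : p (L+1) ≤ p L := anti L (L+1) (by omega)
      have h2 : p L ≤ p 0 := anti 0 L (by omega)
      omega

lemma tele_mono (p : ℕ → ℕ) (mono : ∀ i j, i ≤ j → p i ≤ p j) (L : ℕ) :
    ∑ i ∈ range L, (p (i + 1) - p i) = p L - p 0 := by
  induction L with
  | zero => simp
  | succ L ih =>
      rw [sum_range_succ, ih]
      have h1 : p L ≤ p (L+1) := mono L (L+1) (by omega)
      have h2 : p 0 ≤ p L := mono 0 L (by omega)
      omega

/-- row margins of the coupling. -/
lemma XX_row (k M K m : ℕ) (h1 : 1 ≤ m) (h2 : m ≤ K - 1) :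
    ∑ i ∈ range (K - 1), XX k M K m (i + 1) = cc k M m := by
  set T := FF k M (K-1) with hT
  set p : ℕ → ℕ := fun i => max (FF k M (m-1)) (min (FF k M m) (T - FF k M i)) with hp
  have hFF0 : FF k M 0 = 0 := by simp [FF]
  have hbT : FF k M m ≤ T := hT ▸ FF_mono k M (by omega)
  have hab : FF k M (m-1) ≤ FF k M m := FF_mono k M (by omega)
  have anti : ∀ i j, i ≤ j → p j ≤ p i := by
    intro i j hij
    have := FF_mono k M hij
    simp only [hp]
    omega
  have hterm : ∀ i, XX k M K m (i + 1) = p i - p (i + 1) := by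
    intro i
    have hvu : FF k M i ≤ FF k M (i+1) := FF_mono k M (by omega)
    simp only [XX, hp, Nat.add_sub_cancel, ← hT]
    omega
  rw [Finset.sum_congr rfl (fun i _ => hterm i), tele_anti p anti]
  have h0 : p 0 = FF k M m := by
    simp only [hp, hFF0]
    omega
  have hL : p (K-1) = FF k M (m-1) := by
    simp only [hp, ← hT]
    omega
  rw [h0, hL]
  have : FF k M m = FF k M (m-1) + cc k M m := by
    have := FF_succ k M (m-1)
    rw [Nat.sub_add_cancel h1] at this
    omega
  omega

/-- column margins of the coupling. -/
lemma XX_col (k M K m' : ℕ) (h1 : 1 ≤ m') (h2 : m' ≤ K - 1) :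
    ∑ i ∈ range (K - 1), XX k M K (i + 1) m' = cc k M m' := by
  set T := FF k M (K-1) with hT
  set q : ℕ → ℕ := fun i => max (T - FF k M m') (min (T - FF k M (m'-1)) (FF k M i)) with hq
  have hFF0 : FF k M 0 = 0 := by simp [FF]
  have hm'T : FF k M m' ≤ T := hT ▸ FF_mono k M (by omega)
  have hm'm : FF k M (m'-1) ≤ FF k M m' := FF_mono k M (by omega)
  have mono : ∀ i j, i ≤ j → q i ≤ q j := by
    intro i j hij
    have := FF_mono k M hij
    simp only [hq]
    omega
  have hterm : ∀ i, XX k M K (i + 1) m' = q (i + 1) - q i := by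
    intro i
    have hvu : FF k M i ≤ FF k M (i+1) := FF_mono k M (by omega)
    simp only [XX, hq, Nat.add_sub_cancel, ← hT]
    omega
  rw [Finset.sum_congr rfl (fun i _ => hterm i), tele_mono q mono]
  have h0 : q 0 = T - FF k M m' := by
    simp only [hq, hFF0]
    omega
  have hL : q (K-1) = T - FF k M (m'-1) := by
    simp only [hq, ← hT]
    omega
  rw [h0, hL]
  have : FF k M m' = FF k M (m'-1) + cc k M m' := by
    have := FF_succ k M (m'-1)
    rw [Nat.sub_add_cancel h1] at this
    omega
  omega

lemma FF_Ico (k M m : ℕ) : FF k M m = ∑ i ∈ Ico 1 (m+1), cc k M i := by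
  rw [sum_Ico_eq_sum_range]
  simp [FF, Nat.add_comm 1]

lemma low_aux {k M K m m' : ℕ} (hKk : K ≤ k) (hKM : K ≤ M)
    (hm : 1 ≤ m) (hmm' : m ≤ m') (hsum : m + m' + 1 ≤ K) :
    FF k M m + FF k M m' ≤ FF k M (K - 1) := by
  have hK1 : K - 1 + 1 = K := by omega
  have hstep : FF k M m ≤ ∑ i ∈ Ico (K-m) K, cc k M i := by
    rw [FF_Ico]
    calc ∑ i ∈ Ico 1 (m+1), cc k M i ≤ ∑ i ∈ Ico 1 (m+1), cc k M (K - i) := by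
          apply sum_le_sum
          intro i hi
          simp only [mem_Ico] at hi
          exact domK hKk hKM ((K - i) - i) i (K - i) le_rfl (by omega) (by omega)
      _ = ∑ i ∈ Ico (K-m) K, cc k M i := by
          refine sum_nbij' (fun i => K - i) (fun i => K - i) ?_ ?_ ?_ ?_ ?_
          · intro a ha
            simp only [mem_Ico] at ha
            have h : K - a ∈ Ico (K-m) K := mem_Ico.2 ⟨by omega, by omega⟩
            exact h
          · intro a ha
            simp only [mem_Ico] at ha
            have h : K - a ∈ Ico 1 (m+1) := mem_Ico.2 ⟨by omega, by omega⟩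
            exact h
          · intro a ha
            simp only [mem_Ico] at ha
            show K - (K - a) = a
            omega
          · intro a ha
            simp only [mem_Ico] at ha
            show K - (K - a) = a
            omega
          · intro a ha
            rfl
  have hdisj : Disjoint (Ico 1 (m'+1)) (Ico (K-m) K) := by
    rw [Finset.disjoint_left]
    intro a ha ha'
    simp only [mem_Ico] at ha ha'
    omega
  have hunion : ∑ i ∈ Ico 1 (m'+1), cc k M i + ∑ i ∈ Ico (K-m) K, cc k M i
      ≤ FF k M (K-1) := by
    rw [← sum_union hdisj, FF_Ico, hK1]
    apply sum_le_sum_of_subset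
    intro a ha
    simp only [mem_union, mem_Ico] at ha ⊢
    omega
  rw [FF_Ico k M m']
  omega

lemma up_aux {k M K U m m' : ℕ} (hKk : K ≤ k) (hKM : K ≤ M) (hU : U + K = k + M)
    (hm' : 1 ≤ m') (hm'm : m' ≤ m) (hmK : m ≤ K - 1) (hK : 1 ≤ K)
    (hsum : U + 1 ≤ m + m') :
    FF k M (K - 1) ≤ FF k M (m - 1) + FF k M (m' - 1) := by
  have hkU : k ≤ U := by omega
  have hMU : M ≤ U := by omega
  have hm1 : 1 ≤ m := le_trans hm' hm'm
  have hK1 : K - 1 + 1 = K := by omega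
  have hm11 : m - 1 + 1 = m := by omega
  have hsplit : FF k M (K-1) = FF k M (m-1) + ∑ i ∈ Ico m K, cc k M i := by
    rw [FF_Ico, FF_Ico, hK1, hm11]
    exact (sum_Ico_consecutive (fun i => cc k M i) (by omega : 1 ≤ m) (by omega : m ≤ K)).symm
  have htail : ∑ i ∈ Ico m K, cc k M i ≤ FF k M (m' - 1) := by
    have hstep : ∑ i ∈ Ico m K, cc k M i ≤ ∑ i ∈ Ico m K, cc k M (U - i) := by
      apply sum_le_sum
      intro i hi
      simp only [mem_Ico] at hi
      exact domA hkU hMU (i - (U - i)) (U - i) i le_rfl (by omega) (by omega)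
    have hre : ∑ i ∈ Ico m K, cc k M (U - i) = ∑ i ∈ Ico (U+1-K) (U+1-m), cc k M i := by
      refine sum_nbij' (fun i => U - i) (fun i => U - i) ?_ ?_ ?_ ?_ ?_
      · intro a ha
        simp only [mem_Ico] at ha
        have h : U - a ∈ Ico (U+1-K) (U+1-m) := mem_Ico.2 ⟨by omega, by omega⟩
        exact h
      · intro a ha
        simp only [mem_Ico] at ha
        have h : U - a ∈ Ico m K := mem_Ico.2 ⟨by omega, by omega⟩
        exact h
      · intro a ha
        simp only [mem_Ico] at ha
        show U - (U - a) = a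
        omega
      · intro a ha
        simp only [mem_Ico] at ha
        show U - (U - a) = a
        omega
      · intro a ha
        rfl
    have hsub : ∑ i ∈ Ico (U+1-K) (U+1-m), cc k M i ≤ ∑ i ∈ Ico 1 (m'-1+1), cc k M i := by
      apply sum_le_sum_of_subset
      intro a ha
      simp only [mem_Ico] at ha ⊢
      omega
    rw [FF_Ico]
    omega
  omega

lemma XX_support {k M K U m m' : ℕ} (hKk : K ≤ k) (hKM : K ≤ M) (hU : U + K = k + M)
    (hm : 1 ≤ m) (hmK : m ≤ K - 1) (hm' : 1 ≤ m') (hm'K : m' ≤ K - 1)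
    (hX : XX k M K m m' ≠ 0) : K ≤ m + m' ∧ m + m' ≤ U := by
  have hK : 1 ≤ K := by omega
  constructor
  · by_contra hcon
    have hlow : FF k M m + FF k M m' ≤ FF k M (K - 1) := by
      rcases le_total m m' with h | h
      · exact low_aux hKk hKM hm h (by omega)
      · have := low_aux hKk hKM hm' h (by omega)
        omega
    have h1 : FF k M (m'-1) ≤ FF k M m' := FF_mono k M (by omega)
    have h2 : FF k M (m-1) ≤ FF k M m := FF_mono k M (by omega)
    have h3 : FF k M m' ≤ FF k M (K-1) := FF_mono k M (by omega)
    simp only [XX] at hX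
    omega
  · by_contra hcon
    have hup : FF k M (K - 1) ≤ FF k M (m - 1) + FF k M (m' - 1) := by
      rcases le_total m' m with h | h
      · exact up_aux hKk hKM hU hm' h hmK hK (by omega)
      · have := up_aux hKk hKM hU hm h hm'K hK (by omega)
        omega
    have h1 : FF k M (m'-1) ≤ FF k M (K-1) := FF_mono k M (by omega)
    have h2 : FF k M (m-1) ≤ FF k M (K-1) := FF_mono k M (by omega)
    simp only [XX] at hX
    omega

lemma bin_aux (q m m' e : ℕ) (hmq : m ≤ q) (hem : e ≤ m) (h1 : m' - e ≤ q - m) :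
    q.choose m * (m.choose e * (q - m).choose (m' - e)) *
      (e.factorial * (m - e).factorial * (m' - e).factorial * (q - m - (m' - e)).factorial)
      = q.factorial := by
  have A : m.choose e * e.factorial * (m - e).factorial = m.factorial :=
    Nat.choose_mul_factorial_mul_factorial hem
  have B : (q - m).choose (m' - e) * (m' - e).factorial * (q - m - (m' - e)).factorial
      = (q - m).factorial := Nat.choose_mul_factorial_mul_factorial h1
  have C : q.choose m * m.factorial * (q - m).factorial = q.factorial :=
    Nat.choose_mul_factorial_mul_factorial hmq
  calc q.choose m * (m.choose e * (q - m).choose (m' - e)) *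
        (e.factorial * (m - e).factorial * (m' - e).factorial * (q - m - (m' - e)).factorial)
      = q.choose m * ((m.choose e * e.factorial * (m - e).factorial) *
          ((q - m).choose (m' - e) * (m' - e).factorial * (q - m - (m' - e)).factorial)) := by
        ring
    _ = q.choose m * (m.factorial * (q - m).factorial) := by rw [A, B]
    _ = q.choose m * m.factorial * (q - m).factorial := by ring
    _ = q.factorial := C

lemma bin_id (q m m' e : ℕ) (hem : e ≤ m) (hem' : e ≤ m') (hmq : m ≤ q) (hm'q : m' ≤ q)
    (h1 : m' - e ≤ q - m) (h2 : m - e ≤ q - m') :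
    q.choose m * (m.choose e * (q - m).choose (m' - e))
      = q.choose m' * (m'.choose e * (q - m').choose (m - e)) := by
  have h3 : q - m - (m' - e) = q - m' - (m - e) := by omega
  have k1 := bin_aux q m m' e hmq hem h1
  have k2 := bin_aux q m' m e hm'q hem' h2
  rw [h3] at k1
  set P := e.factorial * (m - e).factorial * (m' - e).factorial * (q - m' - (m - e)).factorial
    with hP
  have hPpos : 0 < P := by
    rw [hP]; positivity
  apply Nat.eq_of_mul_eq_mul_right hPpos
  rw [k1, ← k2, hP]
  ring

lemma hyper_count (V Pd : Finset ℕ) (hPV : Pd ⊆ V) (m' i : ℕ) (him : i ≤ m') :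
    ((V.powersetCard m').filter (fun Q => (Q ∩ Pd).card = i)).card
      = Pd.card.choose i * ((V.card - Pd.card).choose (m' - i)) := by
  have e2 : ((V \ Pd).powersetCard (m' - i)).card = (V.card - Pd.card).choose (m' - i) := by
    rw [card_powersetCard, card_sdiff_of_subset hPV]
  rw [← e2, ← card_powersetCard i Pd, ← card_product]
  apply card_nbij' (fun Q => (Q ∩ Pd, Q \ Pd)) (fun pr => pr.1 ∪ pr.2)
  · intro Q hQ
    simp only [mem_coe, mem_filter, mem_powersetCard] at hQ
    obtain ⟨⟨hQV, hQc⟩, hQi⟩ := hQ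
    have hsplit : (Q ∩ Pd).card + (Q \ Pd).card = Q.card := card_inter_add_card_sdiff Q Pd
    refine mem_product.2 ⟨mem_powersetCard.2 ⟨inter_subset_right, hQi⟩,
      mem_powersetCard.2 ⟨sdiff_subset_sdiff hQV Subset.rfl,
        (by omega : (Q \ Pd).card = m' - i)⟩⟩
  · intro pr hpr
    simp only [mem_coe, mem_product, mem_powersetCard] at hpr
    obtain ⟨⟨hp1, hc1⟩, ⟨hp2, hc2⟩⟩ := hpr
    have hdisj : Disjoint pr.1 pr.2 := by
      apply Finset.disjoint_left.2
      intro a ha1 ha2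
      exact (mem_sdiff.1 (hp2 ha2)).2 (hp1 ha1)
    have hint : (pr.1 ∪ pr.2) ∩ Pd = pr.1 := by
      ext x
      simp only [mem_inter, mem_union]
      constructor
      · rintro ⟨hx1 | hx2, hxP⟩
        · exact hx1
        · exact absurd hxP (mem_sdiff.1 (hp2 hx2)).2
      · intro hx
        exact ⟨Or.inl hx, hp1 hx⟩
    refine mem_filter.2 ⟨mem_powersetCard.2 ⟨?_, ?_⟩, ?_⟩
    · exact union_subset (hp1.trans hPV) (hp2.trans (sdiff_subset))
    · rw [card_union_of_disjoint hdisj, hc1, hc2]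
      omega
    · rw [hint, hc1]
  · intro Q hQ
    simp only [mem_coe, mem_filter, mem_powersetCard] at hQ
    show Q ∩ Pd ∪ Q \ Pd = Q
    exact sup_inf_sdiff Q Pd
  · intro pr hpr
    simp only [mem_coe, mem_product, mem_powersetCard] at hpr
    obtain ⟨⟨hp1, hc1⟩, ⟨hp2, hc2⟩⟩ := hpr
    have hint : (pr.1 ∪ pr.2) ∩ Pd = pr.1 := by
      ext x
      simp only [mem_inter, mem_union]
      constructor
      · rintro ⟨hx1 | hx2, hxP⟩
        · exact hx1
        · exact absurd hxP (mem_sdiff.1 (hp2 hx2)).2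
      · intro hx
        exact ⟨Or.inl hx, hp1 hx⟩
    have hsd : (pr.1 ∪ pr.2) \ Pd = pr.2 := by
      ext x
      simp only [mem_sdiff, mem_union]
      constructor
      · rintro ⟨hx1 | hx2, hxP⟩
        · exact absurd (hp1 hx1) hxP
        · exact hx2
      · intro hx
        exact ⟨Or.inr hx, (mem_sdiff.1 (hp2 hx)).2⟩
    rw [Prod.ext_iff]
    exact ⟨hint, hsd⟩

def fam (n k s : ℕ) : Finset (Finset ℕ) :=
  ((range n).powersetCard k).filter (fun C => s ≤ (C ∩ range k).card)

def EE (n k s : ℕ) : Finset (Finset ℕ) := (fam n k s).erase (range k)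

def mCl (k : ℕ) (C : Finset ℕ) : ℕ := k - (C ∩ range k).card

lemma mem_EE_iff {n k s : ℕ} {D : Finset ℕ} :
    D ∈ EE n k s ↔ D ⊆ range n ∧ D.card = k ∧ s ≤ (D ∩ range k).card ∧ D ≠ range k := by
  unfold EE fam
  rw [mem_erase, mem_filter, mem_powersetCard]
  tauto

lemma EE_facts {n k s : ℕ} (hsk : s < k) {C : Finset ℕ} (hC : C ∈ EE n k s) :
    C ⊆ range n ∧ C.card = k ∧ (range k \ C).card = mCl k C ∧
      (C \ range k).card = mCl k C ∧ 1 ≤ mCl k C ∧ mCl k C ≤ k - s := by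
  obtain ⟨hsub, hcard, hint, hne⟩ := mem_EE_iff.1 hC
  have h1 : (C ∩ range k).card + (C \ range k).card = C.card :=
    card_inter_add_card_sdiff C (range k)
  have h2 : (range k ∩ C).card + (range k \ C).card = (range k).card :=
    card_inter_add_card_sdiff (range k) C
  have h3 : (range k ∩ C) = (C ∩ range k) := inter_comm _ _
  have h4 : (range k).card = k := card_range k
  have h5 : (C ∩ range k).card < k := by
    rcases Nat.lt_or_ge ((C ∩ range k).card) k with h | h
    · exact h
    · exfalso
      have hsub2 : C ∩ range k ⊆ range k := inter_subset_right
      have : C ∩ range k = range k := eq_of_subset_of_card_le hsub2 (by omega)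
      have hRC : range k ⊆ C := by
        rw [← this]; exact inter_subset_left
      exact hne (Finset.eq_of_subset_of_card_le hRC (by omega)).symm
  rw [h3] at h2
  unfold mCl
  refine ⟨hsub, hcard, by omega, by omega, by omega, by omega⟩

/-- construct a member of `EE` from its two coordinates. -/
lemma build_mem {n k s : ℕ} (hsk : s < k) (hkn : k ≤ n) {A' B' : Finset ℕ} {m' : ℕ}
    (hm'1 : 1 ≤ m') (hm'K : m' ≤ k - s)
    (hA : A' ⊆ range k) (hAc : A'.card = m') (hB : B' ⊆ range n \ range k)
    (hBc : B'.card = m') :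
    ((range k \ A') ∪ B') ∈ EE n k s ∧ mCl k ((range k \ A') ∪ B') = m' ∧
      range k \ ((range k \ A') ∪ B') = A' ∧ ((range k \ A') ∪ B') \ range k = B' := by
  have hBk : ∀ x ∈ B', x ∉ range k := fun x hx => (mem_sdiff.1 (hB hx)).2
  have hAk : ∀ x ∈ A', x ∈ range k := fun x hx => hA hx
  have hDint : ((range k \ A') ∪ B') ∩ range k = range k \ A' := by
    ext x
    simp only [mem_inter, mem_union, mem_sdiff]
    constructor
    · rintro ⟨hx1 | hx2, hxk⟩
      · exact hx1
      · exact absurd hxk (hBk x hx2)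
    · intro hx
      exact ⟨Or.inl hx, hx.1⟩
  have hDsd : ((range k \ A') ∪ B') \ range k = B' := by
    ext x
    simp only [mem_sdiff, mem_union]
    constructor
    · rintro ⟨hx1 | hx2, hxk⟩
      · exact absurd hx1.1 hxk
      · exact hx2
    · intro hx
      exact ⟨Or.inr hx, hBk x hx⟩
  have hcompl : range k \ (range k \ A') = A' := by
    rw [sdiff_sdiff_self_left]
    exact inter_eq_right.2 hA
  have hDk : range k \ ((range k \ A') ∪ B') = A' := by
    rw [sdiff_union_distrib, hcompl]
    apply inter_eq_left.2
    intro x hx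
    simp only [mem_sdiff]
    exact ⟨hA hx, fun hxB => (hBk x hxB) (hA hx)⟩
  have hAcard : (range k \ A').card = k - m' := by
    rw [card_sdiff_of_subset hA, card_range, hAc]
  have hdisj : Disjoint (range k \ A') B' := by
    apply Finset.disjoint_left.2
    intro a ha haB
    exact (hBk a haB) (mem_sdiff.1 ha).1
  have hDcard : ((range k \ A') ∪ B').card = k := by
    rw [card_union_of_disjoint hdisj, hAcard, hBc]
    omega
  have hDn : ((range k \ A') ∪ B') ⊆ range n := by
    apply union_subset
    · exact (sdiff_subset).trans (by
        intro x hx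
        simp only [mem_range] at *
        omega)
    · exact hB.trans sdiff_subset
  have hint : s ≤ (((range k \ A') ∪ B') ∩ range k).card := by
    rw [hDint, hAcard]
    omega
  have hne : ((range k \ A') ∪ B') ≠ range k := by
    intro heq
    obtain ⟨x, hx⟩ := card_pos.1 (by omega : 0 < B'.card)
    have : x ∈ (range k \ A') ∪ B' := mem_union_right _ hx
    rw [heq] at this
    exact (hBk x hx) this
  refine ⟨mem_EE_iff.2 ⟨hDn, hDcard, hint, hne⟩, ?_, hDk, hDsd⟩
  unfold mCl
  rw [hDint, hAcard]
  omega

/-- count of partners in a given class with given coordinatewise intersections. -/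
lemma fiber_count {n k s : ℕ} (hsk : s < k) (hkn : k ≤ n) {C : Finset ℕ}
    (hC : C ∈ EE n k s) (m' e f : ℕ) (hm'1 : 1 ≤ m') (hm'K : m' ≤ k - s)
    (he : e ≤ m') (hf : f ≤ m') :
    ((EE n k s).filter (fun D => mCl k D = m' ∧
        ((range k \ C) ∩ (range k \ D)).card = e ∧
        ((C \ range k) ∩ (D \ range k)).card = f)).card
      = ((mCl k C).choose e * ((k - mCl k C).choose (m' - e))) *
        ((mCl k C).choose f * (((n - k) - mCl k C).choose (m' - f))) := by
  obtain ⟨hCn, hCk, hCa, hCb, hm1, hmK⟩ := EE_facts hsk hC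
  have hT1 : (((range k).powersetCard m').filter
      (fun A' => (A' ∩ (range k \ C)).card = e)).card
      = (mCl k C).choose e * ((k - mCl k C).choose (m' - e)) := by
    have := hyper_count (range k) (range k \ C) sdiff_subset m' e he
    rwa [card_range, hCa] at this
  have hT2 : ((((range n) \ range k).powersetCard m').filter
      (fun B' => (B' ∩ (C \ range k)).card = f)).card
      = (mCl k C).choose f * (((n - k) - mCl k C).choose (m' - f)) := by
    have hsub : C \ range k ⊆ range n \ range k := sdiff_subset_sdiff hCn Subset.rfl
    have hrk : (range k : Finset ℕ) ⊆ range n := by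
      intro x hx
      simp only [mem_range] at *
      omega
    have hVcard : ((range n) \ range k).card = n - k := by
      rw [card_sdiff_of_subset hrk, card_range, card_range]
    have := hyper_count ((range n) \ range k) (C \ range k) hsub m' f hf
    rwa [hVcard, hCb] at this
  rw [← hT1, ← hT2, ← card_product]
  apply card_nbij' (fun D => (range k \ D, D \ range k))
    (fun pr => (range k \ pr.1) ∪ pr.2)
  · intro D hD
    simp only [mem_coe, mem_filter] at hD
    obtain ⟨hDE, hDm, hDe, hDf⟩ := hD
    obtain ⟨hDn, hDk, hDa, hDb, hm'1', hm'K'⟩ := EE_facts hsk hDE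
    refine mem_product.2 ⟨mem_filter.2 ⟨mem_powersetCard.2 ⟨sdiff_subset, by rw [hDa, hDm]⟩, ?_⟩,
      mem_filter.2 ⟨mem_powersetCard.2 ⟨sdiff_subset_sdiff hDn Subset.rfl, by rw [hDb, hDm]⟩, ?_⟩⟩
    · show ((range k \ D) ∩ (range k \ C)).card = e
      rw [inter_comm]; exact hDe
    · show ((D \ range k) ∩ (C \ range k)).card = f
      rw [inter_comm]; exact hDf
  · intro pr hpr
    simp only [mem_coe, mem_product, mem_filter, mem_powersetCard] at hpr
    obtain ⟨⟨⟨hp1, hc1⟩, hfe⟩, ⟨⟨hp2, hc2⟩, hff⟩⟩ := hpr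
    obtain ⟨hmem, hmcl, hx1, hx2⟩ := build_mem hsk hkn hm'1 hm'K hp1 hc1 hp2 hc2
    refine mem_filter.2 ⟨hmem, hmcl, ?_, ?_⟩
    · show ((range k \ C) ∩ (range k \ ((range k \ pr.1) ∪ pr.2))).card = e
      rw [hx1, inter_comm]; exact hfe
    · show ((C \ range k) ∩ (((range k \ pr.1) ∪ pr.2) \ range k)).card = f
      rw [hx2, inter_comm]; exact hff
  · intro D hD
    simp only [mem_coe, mem_filter] at hD
    obtain ⟨hDE, _, _, _⟩ := hD
    obtain ⟨hDn, hDk, _, _, _, _⟩ := EE_facts hsk hDE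
    show (range k \ (range k \ D)) ∪ (D \ range k) = D
    rw [sdiff_sdiff_self_left, inter_comm]
    exact sup_inf_sdiff D (range k)
  · intro pr hpr
    simp only [mem_coe, mem_product, mem_filter, mem_powersetCard] at hpr
    obtain ⟨⟨⟨hp1, hc1⟩, _⟩, ⟨⟨hp2, hc2⟩, _⟩⟩ := hpr
    obtain ⟨_, _, hx1, hx2⟩ := build_mem hsk hkn hm'1 hm'K hp1 hc1 hp2 hc2
    rw [Prod.ext_iff]
    exact ⟨hx1, hx2⟩

-- new defs
def eOf (k u : ℕ) : ℕ := u - k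

def fOf (k K u : ℕ) : ℕ := (u - K) - (u - k)

def ddP (k M K m m' u : ℕ) : ℕ :=
  (m.choose (eOf k u) * ((k - m).choose (m' - eOf k u))) *
    (m.choose (fOf k K u) * ((M - m).choose (m' - fOf k K u)))

def ww (n k s : ℕ) (C D : Finset ℕ) : ℚ :=
  if ((range k \ C) ∩ (range k \ D)).card = eOf k (mCl k C + mCl k D) ∧
      ((C \ range k) ∩ (D \ range k)).card = fOf k (k - s + 1) (mCl k C + mCl k D)
  then (XX k (n - k) (k - s + 1) (mCl k C) (mCl k D) : ℚ) /
      ((cc k (n - k) (mCl k C) : ℚ) *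
        (ddP k (n - k) (k - s + 1) (mCl k C) (mCl k D) (mCl k C + mCl k D) : ℚ))
  else 0

lemma ww_nonneg (n k s : ℕ) (C D : Finset ℕ) : 0 ≤ ww n k s C D := by
  unfold ww
  split
  · positivity
  · exact le_rfl

/-- all feasibility facts for the canonical intersection pattern, by linear arithmetic. -/
lemma feas {k s M K U m m' : ℕ} (hs : 2 ≤ s) (hsk : s < k) (hK : K = k - s + 1)
    (hMK : K ≤ M) (hU : U = M + s - 1)
    (hm1 : 1 ≤ m) (hmK : m ≤ K - 1) (hm'1 : 1 ≤ m') (hm'K : m' ≤ K - 1)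
    (hb1 : K ≤ m + m') (hb2 : m + m' ≤ U) :
    eOf k (m + m') ≤ m ∧ eOf k (m + m') ≤ m' ∧ fOf k K (m + m') ≤ m ∧
      fOf k K (m + m') ≤ m' ∧ m' - eOf k (m + m') ≤ k - m ∧ m - eOf k (m + m') ≤ k - m' ∧
      m' - fOf k K (m + m') ≤ M - m ∧ m - fOf k K (m + m') ≤ M - m' ∧
      m ≤ k ∧ m' ≤ k ∧ m ≤ M ∧ m' ≤ M := by
  unfold eOf fOf
  omega

lemma ddP_pos {k s M K U m m' : ℕ} (hs : 2 ≤ s) (hsk : s < k) (hK : K = k - s + 1)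
    (hMK : K ≤ M) (hU : U = M + s - 1)
    (hm1 : 1 ≤ m) (hmK : m ≤ K - 1) (hm'1 : 1 ≤ m') (hm'K : m' ≤ K - 1)
    (hb1 : K ≤ m + m') (hb2 : m + m' ≤ U) : 0 < ddP k M K m m' (m + m') := by
  obtain ⟨h1, h2, h3, h4, h5, h6, h7, h8, h9, h10, h11, h12⟩ :=
    feas hs hsk hK hMK hU hm1 hmK hm'1 hm'K hb1 hb2
  unfold ddP
  have c1 : 0 < m.choose (eOf k (m + m')) := Nat.choose_pos h1
  have c2 : 0 < (k - m).choose (m' - eOf k (m + m')) := Nat.choose_pos h5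
  have c3 : 0 < m.choose (fOf k K (m + m')) := Nat.choose_pos h3
  have c4 : 0 < (M - m).choose (m' - fOf k K (m + m')) := Nat.choose_pos h7
  positivity

lemma dd_swap {k s M K U m m' : ℕ} (hs : 2 ≤ s) (hsk : s < k) (hK : K = k - s + 1)
    (hMK : K ≤ M) (hU : U = M + s - 1)
    (hm1 : 1 ≤ m) (hmK : m ≤ K - 1) (hm'1 : 1 ≤ m') (hm'K : m' ≤ K - 1)
    (hb1 : K ≤ m + m') (hb2 : m + m' ≤ U) :
    cc k M m * ddP k M K m m' (m + m') = cc k M m' * ddP k M K m' m (m + m') := by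
  obtain ⟨h1, h2, h3, h4, h5, h6, h7, h8, h9, h10, h11, h12⟩ :=
    feas hs hsk hK hMK hU hm1 hmK hm'1 hm'K hb1 hb2
  have bid1 := bin_id k m m' (eOf k (m + m')) h1 h2 h9 h10 h5 h6
  have bid2 := bin_id M m m' (fOf k K (m + m')) h3 h4 h11 h12 h7 h8
  unfold cc ddP
  calc k.choose m * M.choose m *
        ((m.choose (eOf k (m+m')) * ((k - m).choose (m' - eOf k (m+m')))) *
          (m.choose (fOf k K (m+m')) * ((M - m).choose (m' - fOf k K (m+m')))))
      = (k.choose m * (m.choose (eOf k (m+m')) * (k - m).choose (m' - eOf k (m+m')))) *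
        (M.choose m * (m.choose (fOf k K (m+m')) * (M - m).choose (m' - fOf k K (m+m')))) := by
        ring
    _ = (k.choose m' * (m'.choose (eOf k (m+m')) * (k - m').choose (m - eOf k (m+m')))) *
        (M.choose m' * (m'.choose (fOf k K (m+m')) * (M - m').choose (m - fOf k K (m+m')))) := by
        rw [bid1, bid2]
    _ = k.choose m' * M.choose m' *
        ((m'.choose (eOf k (m+m')) * ((k - m').choose (m - eOf k (m+m')))) *
          (m'.choose (fOf k K (m+m')) * ((M - m').choose (m - fOf k K (m+m'))))) := by
        ring

lemma row_inner {n k s : ℕ} (hs : 2 ≤ s) (hsk : s < k) (hn : 2 * k - s < n)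
    {C : Finset ℕ} (hC : C ∈ EE n k s) {m' : ℕ} (hm'1 : 1 ≤ m') (hm'K : m' ≤ k - s) :
    ∑ D ∈ (EE n k s).filter (fun D => mCl k D = m'), ww n k s C D
      = (XX k (n - k) (k - s + 1) (mCl k C) m' : ℚ) / (cc k (n - k) (mCl k C) : ℚ) := by
  obtain ⟨hCn, hCk, hCa, hCb, hm1, hmK⟩ := EE_facts hsk hC
  have hterm : ∀ D ∈ (EE n k s).filter (fun D => mCl k D = m'),
      ww n k s C D = if (((range k \ C) ∩ (range k \ D)).card = eOf k (mCl k C + m') ∧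
          ((C \ range k) ∩ (D \ range k)).card = fOf k (k - s + 1) (mCl k C + m'))
        then (XX k (n - k) (k - s + 1) (mCl k C) m' : ℚ) /
          ((cc k (n - k) (mCl k C) : ℚ) *
            (ddP k (n - k) (k - s + 1) (mCl k C) m' (mCl k C + m') : ℚ)) else 0 := by
    intro D hD
    simp only [mem_filter] at hD
    simp only [ww, hD.2]
  rw [sum_congr rfl hterm, sum_ite, sum_const_zero, add_zero, sum_const, filter_filter]
  by_cases hX : XX k (n - k) (k - s + 1) (mCl k C) m' = 0
  · simp [hX]
  · have hband := XX_support (U := (n - k) + s - 1) (by omega) (by omega) (by omega)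
      hm1 (by omega) hm'1 (by omega) hX
    obtain ⟨hb1, hb2⟩ := hband
    obtain ⟨h1, h2, h3, h4, h5, h6, h7, h8, h9, h10, h11, h12⟩ :=
      feas (M := n - k) (U := (n - k) + s - 1) hs hsk rfl (by omega) rfl
        hm1 (by omega) hm'1 (by omega) hb1 hb2
    have hcount := fiber_count hsk (by omega : k ≤ n) hC m'
      (eOf k (mCl k C + m')) (fOf k (k - s + 1) (mCl k C + m')) hm'1 hm'K h2 h4
    rw [hcount]
    have hccpos : 0 < cc k (n - k) (mCl k C) := cc_pos h9 h11
    have hddpos : 0 < ddP k (n - k) (k - s + 1) (mCl k C) m' (mCl k C + m') :=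
      ddP_pos (U := (n - k) + s - 1) hs hsk rfl (by omega) rfl hm1 (by omega) hm'1
        (by omega) hb1 hb2
    have hcc0 : ((cc k (n - k) (mCl k C) : ℚ)) ≠ 0 := by
      exact_mod_cast hccpos.ne'
    have hdd0 : ((ddP k (n - k) (k - s + 1) (mCl k C) m' (mCl k C + m') : ℚ)) ≠ 0 := by
      exact_mod_cast hddpos.ne'
    show (((mCl k C).choose (eOf k (mCl k C + m')) *
        ((k - mCl k C).choose (m' - eOf k (mCl k C + m')))) *
        ((mCl k C).choose (fOf k (k - s + 1) (mCl k C + m')) *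
          (((n - k) - mCl k C).choose (m' - fOf k (k - s + 1) (mCl k C + m'))))) •
        ((XX k (n - k) (k - s + 1) (mCl k C) m' : ℚ) /
          ((cc k (n - k) (mCl k C) : ℚ) *
            (ddP k (n - k) (k - s + 1) (mCl k C) m' (mCl k C + m') : ℚ)))
      = (XX k (n - k) (k - s + 1) (mCl k C) m' : ℚ) / (cc k (n - k) (mCl k C) : ℚ)
    have hddeq : ((mCl k C).choose (eOf k (mCl k C + m')) *
        ((k - mCl k C).choose (m' - eOf k (mCl k C + m')))) *
        ((mCl k C).choose (fOf k (k - s + 1) (mCl k C + m')) *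
          (((n - k) - mCl k C).choose (m' - fOf k (k - s + 1) (mCl k C + m'))))
        = ddP k (n - k) (k - s + 1) (mCl k C) m' (mCl k C + m') := rfl
    rw [hddeq, nsmul_eq_mul]
    field_simp

lemma col_inner {n k s : ℕ} (hs : 2 ≤ s) (hsk : s < k) (hn : 2 * k - s < n)
    {D : Finset ℕ} (hD : D ∈ EE n k s) {m : ℕ} (hm1 : 1 ≤ m) (hmK : m ≤ k - s) :
    ∑ C ∈ (EE n k s).filter (fun C => mCl k C = m), ww n k s C D
      = (XX k (n - k) (k - s + 1) m (mCl k D) : ℚ) / (cc k (n - k) (mCl k D) : ℚ) := by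
  obtain ⟨hDn, hDk, hDa, hDb, hm'1, hm'K⟩ := EE_facts hsk hD
  have hterm : ∀ C ∈ (EE n k s).filter (fun C => mCl k C = m),
      ww n k s C D = if (((range k \ C) ∩ (range k \ D)).card = eOf k (m + mCl k D) ∧
          ((C \ range k) ∩ (D \ range k)).card = fOf k (k - s + 1) (m + mCl k D))
        then (XX k (n - k) (k - s + 1) m (mCl k D) : ℚ) /
          ((cc k (n - k) m : ℚ) *
            (ddP k (n - k) (k - s + 1) m (mCl k D) (m + mCl k D) : ℚ)) else 0 := by
    intro C hCf
    simp only [mem_filter] at hCf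
    simp only [ww, hCf.2]
  rw [sum_congr rfl hterm, sum_ite, sum_const_zero, add_zero, sum_const, filter_filter]
  by_cases hX : XX k (n - k) (k - s + 1) m (mCl k D) = 0
  · simp [hX]
  · have hband := XX_support (U := (n - k) + s - 1) (by omega) (by omega) (by omega)
      hm1 (by omega) hm'1 (by omega) hX
    obtain ⟨hb1, hb2⟩ := hband
    obtain ⟨h1, h2, h3, h4, h5, h6, h7, h8, h9, h10, h11, h12⟩ :=
      feas (M := n - k) (U := (n - k) + s - 1) hs hsk rfl (by omega) rfl
        hm1 (by omega) hm'1 (by omega) hb1 hb2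
    have hfilter_eq : (EE n k s).filter (fun C => mCl k C = m ∧
        (((range k \ C) ∩ (range k \ D)).card = eOf k (m + mCl k D) ∧
          ((C \ range k) ∩ (D \ range k)).card = fOf k (k - s + 1) (m + mCl k D)))
        = (EE n k s).filter (fun C => mCl k C = m ∧
        (((range k \ D) ∩ (range k \ C)).card = eOf k (m + mCl k D) ∧
          ((D \ range k) ∩ (C \ range k)).card = fOf k (k - s + 1) (m + mCl k D))) := by
      apply filter_congr
      intro C hCE
      rw [inter_comm (range k \ D) (range k \ C), inter_comm (D \ range k) (C \ range k)]
    have hcount := fiber_count hsk (by omega : k ≤ n) hD m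
      (eOf k (m + mCl k D)) (fOf k (k - s + 1) (m + mCl k D)) hm1 hmK h1 h3
    rw [hfilter_eq, hcount]
    have hccpos : 0 < cc k (n - k) m := cc_pos h9 h11
    have hcc'pos : 0 < cc k (n - k) (mCl k D) := cc_pos h10 h12
    have hddpos : 0 < ddP k (n - k) (k - s + 1) m (mCl k D) (m + mCl k D) :=
      ddP_pos (U := (n - k) + s - 1) hs hsk rfl (by omega) rfl hm1 (by omega) hm'1
        (by omega) hb1 hb2
    have hswap := dd_swap (U := (n - k) + s - 1) hs hsk rfl (by omega) rfl hm1 (by omega)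
      hm'1 (by omega) hb1 hb2
    have hddeq : ((mCl k D).choose (eOf k (m + mCl k D)) *
        ((k - mCl k D).choose (m - eOf k (m + mCl k D)))) *
        ((mCl k D).choose (fOf k (k - s + 1) (m + mCl k D)) *
          (((n - k) - mCl k D).choose (m - fOf k (k - s + 1) (m + mCl k D))))
        = ddP k (n - k) (k - s + 1) (mCl k D) m (m + mCl k D) := rfl
    rw [hddeq, nsmul_eq_mul]
    have hcc0 : ((cc k (n - k) m : ℚ)) ≠ 0 := by exact_mod_cast hccpos.ne'
    have hcc'0 : ((cc k (n - k) (mCl k D) : ℚ)) ≠ 0 := by exact_mod_cast hcc'pos.ne'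
    have hdd0 : ((ddP k (n - k) (k - s + 1) m (mCl k D) (m + mCl k D) : ℚ)) ≠ 0 := by
      exact_mod_cast hddpos.ne'
    have hswapq : (cc k (n - k) m : ℚ) * (ddP k (n - k) (k - s + 1) m (mCl k D) (m + mCl k D) : ℚ)
        = (cc k (n - k) (mCl k D) : ℚ) *
          (ddP k (n - k) (k - s + 1) (mCl k D) m (m + mCl k D) : ℚ) := by
      exact_mod_cast congrArg (Nat.cast (R := ℚ)) hswap
    field_simp
    linear_combination (-1 : ℚ) * hswapq

lemma icc_to_range (K : ℕ) (g : ℕ → ℕ) :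
    ∑ m' ∈ Icc 1 (K - 1), g m' = ∑ i ∈ range (K - 1), g (i + 1) := by
  rw [← Finset.Ico_add_one_right_eq_Icc, sum_Ico_eq_sum_range]
  have h : K - 1 + 1 - 1 = K - 1 := by omega
  rw [h]
  exact sum_congr rfl (fun i _ => by rw [Nat.add_comm])

lemma row_sum {n k s : ℕ} (hs : 2 ≤ s) (hsk : s < k) (hn : 2 * k - s < n)
    {C : Finset ℕ} (hC : C ∈ EE n k s) :
    ∑ D ∈ EE n k s, ww n k s C D = 1 := by
  obtain ⟨hCn, hCk, hCa, hCb, hm1, hmK⟩ := EE_facts hsk hC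
  have hmaps : ∀ D ∈ EE n k s, mCl k D ∈ Icc 1 (k - s) := by
    intro D hD
    obtain ⟨_, _, _, _, ha, hb⟩ := EE_facts hsk hD
    exact mem_Icc.2 ⟨ha, hb⟩
  rw [← sum_fiberwise_of_maps_to hmaps (ww n k s C)]
  have hstep : ∀ m' ∈ Icc 1 (k - s),
      ∑ D ∈ (EE n k s).filter (fun D => mCl k D = m'), ww n k s C D
        = (XX k (n - k) (k - s + 1) (mCl k C) m' : ℚ) / (cc k (n - k) (mCl k C) : ℚ) := by
    intro m' hm'
    obtain ⟨ha, hb⟩ := mem_Icc.1 hm'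
    exact row_inner hs hsk hn hC ha hb
  rw [sum_congr rfl hstep, ← sum_div]
  have hnat : ∑ m' ∈ Icc 1 (k - s), XX k (n - k) (k - s + 1) (mCl k C) m'
      = cc k (n - k) (mCl k C) := by
    have h2 := icc_to_range (k - s + 1) (fun m' => XX k (n - k) (k - s + 1) (mCl k C) m')
    simp only [Nat.add_sub_cancel] at h2
    rw [h2]
    have h3 := XX_row k (n - k) (k - s + 1) (mCl k C) hm1 (by omega)
    simpa only [Nat.add_sub_cancel] using h3
  have hq : ∑ m' ∈ Icc 1 (k - s), (XX k (n - k) (k - s + 1) (mCl k C) m' : ℚ)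
      = (cc k (n - k) (mCl k C) : ℚ) := by
    rw [← Nat.cast_sum, hnat]
  rw [hq]
  have hccpos : 0 < cc k (n - k) (mCl k C) := cc_pos (by omega) (by omega)
  have hcc0 : ((cc k (n - k) (mCl k C) : ℚ)) ≠ 0 := by exact_mod_cast hccpos.ne'
  exact div_self hcc0

lemma col_sum {n k s : ℕ} (hs : 2 ≤ s) (hsk : s < k) (hn : 2 * k - s < n)
    {D : Finset ℕ} (hD : D ∈ EE n k s) :
    ∑ C ∈ EE n k s, ww n k s C D = 1 := by
  obtain ⟨hDn, hDk, hDa, hDb, hm'1, hm'K⟩ := EE_facts hsk hD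
  have hmaps : ∀ C ∈ EE n k s, mCl k C ∈ Icc 1 (k - s) := by
    intro C hC
    obtain ⟨_, _, _, _, ha, hb⟩ := EE_facts hsk hC
    exact mem_Icc.2 ⟨ha, hb⟩
  rw [← sum_fiberwise_of_maps_to hmaps (fun C => ww n k s C D)]
  have hstep : ∀ m ∈ Icc 1 (k - s),
      ∑ C ∈ (EE n k s).filter (fun C => mCl k C = m), ww n k s C D
        = (XX k (n - k) (k - s + 1) m (mCl k D) : ℚ) / (cc k (n - k) (mCl k D) : ℚ) := by
    intro m hm
    obtain ⟨ha, hb⟩ := mem_Icc.1 hm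
    exact col_inner hs hsk hn hD ha hb
  rw [sum_congr rfl hstep, ← sum_div]
  have hnat : ∑ m ∈ Icc 1 (k - s), XX k (n - k) (k - s + 1) m (mCl k D)
      = cc k (n - k) (mCl k D) := by
    have h2 := icc_to_range (k - s + 1) (fun m => XX k (n - k) (k - s + 1) m (mCl k D))
    simp only [Nat.add_sub_cancel] at h2
    rw [h2]
    have h3 := XX_col k (n - k) (k - s + 1) (mCl k D) hm'1 (by omega)
    simpa only [Nat.add_sub_cancel] using h3
  have hq : ∑ m ∈ Icc 1 (k - s), (XX k (n - k) (k - s + 1) m (mCl k D) : ℚ)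
      = (cc k (n - k) (mCl k D) : ℚ) := by
    rw [← Nat.cast_sum, hnat]
  rw [hq]
  have hccpos : 0 < cc k (n - k) (mCl k D) := cc_pos (by omega) (by omega)
  have hcc0 : ((cc k (n - k) (mCl k D) : ℚ)) ≠ 0 := by exact_mod_cast hccpos.ne'
  exact div_self hcc0

lemma far_pair {n k s : ℕ} (hs : 2 ≤ s) (hsk : s < k) (hn : 2 * k - s < n)
    {C D : Finset ℕ} (hC : C ∈ EE n k s) (hD : D ∈ EE n k s)
    (he : ((range k \ C) ∩ (range k \ D)).card = eOf k (mCl k C + mCl k D))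
    (hf : ((C \ range k) ∩ (D \ range k)).card = fOf k (k - s + 1) (mCl k C + mCl k D))
    (hb1 : k - s + 1 ≤ mCl k C + mCl k D) :
    (C ∩ D).card + 1 = s := by
  obtain ⟨hCn, hCk, hCa, hCb, hm1, hmK⟩ := EE_facts hsk hC
  obtain ⟨hDn, hDk, hDa, hDb, hm'1, hm'K⟩ := EE_facts hsk hD
  have hsplit : ((C ∩ D) ∩ range k).card + ((C ∩ D) \ range k).card = (C ∩ D).card :=
    card_inter_add_card_sdiff _ _
  have hout : (C ∩ D) \ range k = (C \ range k) ∩ (D \ range k) := by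
    ext x
    simp only [mem_sdiff, mem_inter]
    tauto
  have hcompl : range k \ (C ∩ D) = (range k \ C) ∪ (range k \ D) := by
    ext x
    simp only [mem_sdiff, mem_inter, mem_union]
    tauto
  have h2 : (range k ∩ (C ∩ D)).card + (range k \ (C ∩ D)).card = (range k).card :=
    card_inter_add_card_sdiff _ _
  have hUc : ((range k \ C) ∪ (range k \ D)).card + ((range k \ C) ∩ (range k \ D)).card
      = (range k \ C).card + (range k \ D).card := card_union_add_card_inter _ _
  rw [inter_comm (range k) (C ∩ D), hcompl] at h2
  rw [hout] at hsplit
  rw [hCa, hDa] at hUc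
  have hrk : (range k).card = k := card_range k
  unfold eOf at he
  unfold fOf at hf
  unfold mCl at *
  omega

lemma ww_far_zero {n k s : ℕ} (hs : 2 ≤ s) (hsk : s < k) (hn : 2 * k - s < n)
    {C D : Finset ℕ} (hC : C ∈ EE n k s) (hD : D ∈ EE n k s)
    (hcl : s ≤ (C ∩ D).card) : ww n k s C D = 0 := by
  by_contra hne
  obtain ⟨_, _, _, _, hm1, hmK⟩ := EE_facts hsk hC
  obtain ⟨_, _, _, _, hm'1, hm'K⟩ := EE_facts hsk hD
  unfold ww at hne
  by_cases hR : ((range k \ C) ∩ (range k \ D)).card = eOf k (mCl k C + mCl k D) ∧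
      ((C \ range k) ∩ (D \ range k)).card = fOf k (k - s + 1) (mCl k C + mCl k D)
  · rw [if_pos hR] at hne
    have hXne : XX k (n - k) (k - s + 1) (mCl k C) (mCl k D) ≠ 0 := by
      intro h0
      apply hne
      rw [h0]
      simp
    have hband := XX_support (U := (n - k) + s - 1) (by omega) (by omega) (by omega)
      hm1 (by omega) hm'1 (by omega) hXne
    have := far_pair hs hsk hn hC hD hR.1 hR.2 hband.1
    omega
  · rw [if_neg hR] at hne
    exact hne rfl

theorem main_upper {n k s : ℕ} (hs : 2 ≤ s) (hsk : s < k) (hn : 2 * k - s < n)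
    {A' B' : Finset (Finset ℕ)} (hA : A' ⊆ EE n k s) (hB : B' ⊆ EE n k s)
    (hcross : ∀ a ∈ A', ∀ b ∈ B', s ≤ (a ∩ b).card) :
    A'.card + B'.card ≤ (EE n k s).card := by
  have hAq : ((A'.card : ℕ) : ℚ) = ∑ C ∈ EE n k s, ∑ D ∈ EE n k s,
      (if C ∈ A' then ww n k s C D else 0) := by
    calc ((A'.card : ℕ) : ℚ) = ∑ C ∈ A', (1 : ℚ) := by simp
      _ = ∑ C ∈ A', ∑ D ∈ EE n k s, ww n k s C D := by
          refine sum_congr rfl (fun C hC => ?_)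
          exact (row_sum hs hsk hn (hA hC)).symm
      _ = ∑ C ∈ EE n k s, (if C ∈ A' then ∑ D ∈ EE n k s, ww n k s C D else 0) := by
          rw [sum_ite_mem]
          rw [inter_eq_right.2 hA]
      _ = ∑ C ∈ EE n k s, ∑ D ∈ EE n k s, (if C ∈ A' then ww n k s C D else 0) := by
          refine sum_congr rfl (fun C _ => ?_)
          split
          · rfl
          · rw [sum_const_zero]
  have hBq : ((B'.card : ℕ) : ℚ) = ∑ C ∈ EE n k s, ∑ D ∈ EE n k s,
      (if D ∈ B' then ww n k s C D else 0) := by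
    calc ((B'.card : ℕ) : ℚ) = ∑ D ∈ B', (1 : ℚ) := by simp
      _ = ∑ D ∈ B', ∑ C ∈ EE n k s, ww n k s C D := by
          refine sum_congr rfl (fun D hD => ?_)
          exact (col_sum hs hsk hn (hB hD)).symm
      _ = ∑ D ∈ EE n k s, (if D ∈ B' then ∑ C ∈ EE n k s, ww n k s C D else 0) := by
          rw [sum_ite_mem]
          rw [inter_eq_right.2 hB]
      _ = ∑ D ∈ EE n k s, ∑ C ∈ EE n k s, (if D ∈ B' then ww n k s C D else 0) := by
          refine sum_congr rfl (fun D _ => ?_)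
          split
          · rfl
          · rw [sum_const_zero]
      _ = ∑ C ∈ EE n k s, ∑ D ∈ EE n k s, (if D ∈ B' then ww n k s C D else 0) :=
          sum_comm
  have htot : ∑ C ∈ EE n k s, ∑ D ∈ EE n k s, ww n k s C D = ((EE n k s).card : ℚ) := by
    calc ∑ C ∈ EE n k s, ∑ D ∈ EE n k s, ww n k s C D
        = ∑ C ∈ EE n k s, (1 : ℚ) := by
          refine sum_congr rfl (fun C hC => ?_)
          exact row_sum hs hsk hn hC
      _ = ((EE n k s).card : ℚ) := by simp
  have hkey : ((A'.card : ℕ) : ℚ) + ((B'.card : ℕ) : ℚ) ≤ ((EE n k s).card : ℚ) := by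
    rw [hAq, hBq, ← htot, ← sum_add_distrib]
    refine sum_le_sum (fun C hC => ?_)
    rw [← sum_add_distrib]
    refine sum_le_sum (fun D hD => ?_)
    by_cases hCA : C ∈ A'
    · by_cases hDB : D ∈ B'
      · rw [if_pos hCA, if_pos hDB,
          ww_far_zero hs hsk hn hC hD (hcross C hCA D hDB)]
        norm_num
      · rw [if_pos hCA, if_neg hDB, add_zero]
    · rw [if_neg hCA, zero_add]
      by_cases hDB : D ∈ B'
      · rw [if_pos hDB]
      · rw [if_neg hDB]
        exact ww_nonneg n k s C D
  exact_mod_cast hkey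


end MIG

/-- The bipartite graph G on two copies of C \ {[k]}, with cross edges between
sets intersecting in fewer than s elements, has maximum independent set of
size exactly |C| - 1. Independent sets of G correspond to pairs (A', B') of
subsets of the two parts with no cross edge between them. -/
theorem max_indep_in_cross_graph (n k s : ℕ) (hs : 2 ≤ s) (hsk : s < k)
    (hn : 2 * k - s < n) :
    IsGreatest {m : ℕ | ∃ A' B' : Finset (Finset ℕ),
        A' ⊆ (((Finset.range n).powersetCard k).filter
              (fun C => s ≤ (C ∩ Finset.range k).card)).erase (Finset.range k) ∧
        B' ⊆ (((Finset.range n).powersetCard k).filter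
              (fun C => s ≤ (C ∩ Finset.range k).card)).erase (Finset.range k) ∧
        (∀ a ∈ A', ∀ b ∈ B', s ≤ (a ∩ b).card) ∧
        A'.card + B'.card = m}
      ((((Finset.range n).powersetCard k).filter
          (fun C => s ≤ (C ∩ Finset.range k).card)).card - 1) := by
  have hkn : k ≤ n := by omega
  have hPmem : Finset.range k ∈ MIG.fam n k s := by
    unfold MIG.fam
    refine Finset.mem_filter.2 ⟨Finset.mem_powersetCard.2
      ⟨Finset.range_subset_range.2 hkn, Finset.card_range k⟩, ?_⟩
    rw [Finset.inter_self, Finset.card_range]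
    omega
  have hEcard : (MIG.EE n k s).card = (MIG.fam n k s).card - 1 :=
    Finset.card_erase_of_mem hPmem
  constructor
  · refine ⟨MIG.EE n k s, ∅, Finset.Subset.rfl, Finset.empty_subset _, ?_, ?_⟩
    · intro a _ b hb
      exact absurd hb (Finset.notMem_empty b)
    · rw [Finset.card_empty, add_zero]
      exact hEcard
  · rintro x ⟨A', B', hA, hB, hcross, rfl⟩
    have h := MIG.main_upper hs hsk hn hA hB hcross
    calc A'.card + B'.card ≤ (MIG.EE n k s).card := h
      _ = _ := hEcard
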